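/- Let P(λ) = ∑_{i=0}^{k} A_i λ^i be an n×n complex matrix polynomial of odd degree k ≥ 3 with A_0 ≠ 0, and let δ ∈ ℂ be nonzero. Write 𝒯_P(λ) = λ𝒯₁ − 𝒯₀ and 𝒯_{rev P}(λ) = λ𝒯̃₁ − 𝒯̃₀. Let x, y ∈ ℂ^{kn} be nonzero with 𝒯_P(δ)x = 0 and y*𝒯_P(δ) = 0, and assume y*𝒯₁x ≠ 0. Then (|δ| ‖𝒯₁‖₂ + ‖𝒯₀‖₂) ‖y‖₂ ‖x‖₂ / (|δ| · |y*𝒯₁x|) = (|1/δ| ‖𝒯̃₁‖₂ + ‖𝒯̃₀‖₂) ‖R D y‖₂ ‖R D x‖₂ / (|1/δ| · |(R D y)* 𝒯̃₁ (R D x)|); that is, the condition number of δ as an eigenvalue of 𝒯_P equals the condition number of 1/δ as an eigenvalue of 𝒯_{rev P}. -/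

import Mathlib

open Finset Matrix

noncomputable section
namespace MPoly

abbrev Mat (n : ℕ) := Matrix (Fin n) (Fin n) ℂ

variable {n : ℕ}

/-- Euclidean norm of a complex vector. -/
def vecNorm {ι : Type*} [Fintype ι] (x : ι → ℂ) : ℝ :=
  Real.sqrt (∑ i, ‖x i‖ ^ 2)

/-- Spectral norm (operator norm induced by the Euclidean vector norm). -/
def specNorm {ι κ : Type*} [Fintype ι] [Fintype κ] [DecidableEq κ] (M : Matrix ι κ ℂ) : ℝ :=
  ‖LinearMap.toContinuousLinearMap (Matrix.toEuclideanLin M)‖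

/-- Evaluation of the matrix polynomial `P(λ) = ∑_{i=0}^k A_i λ^i`. -/
def Peval (k : ℕ) (A : ℕ → Mat n) (lam : ℂ) : Mat n :=
  ∑ i ∈ Finset.range (k + 1), lam ^ i • A i

/-- Derivative `P′(λ) = ∑_{i=1}^k i A_i λ^{i-1}`. -/
def Pderiv (k : ℕ) (A : ℕ → Mat n) (lam : ℂ) : Mat n :=
  ∑ i ∈ Finset.range k, (((i : ℂ) + 1) * lam ^ i) • A (i + 1)

/-- `i`-th Horner shift `P_i(λ) = ∑_{j=0}^i λ^j A_{k-i+j}`. -/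
def horner (k : ℕ) (A : ℕ → Mat n) (i : ℕ) (lam : ℂ) : Mat n :=
  ∑ j ∈ Finset.range (i + 1), lam ^ j • A (k - i + j)

/-- `P^i(λ) = ∑_{j=0}^i λ^j A_j`. -/
def lowPart (A : ℕ → Mat n) (i : ℕ) (lam : ℂ) : Mat n :=
  ∑ j ∈ Finset.range (i + 1), lam ^ j • A j

/-- `q`-th (0-indexed) block of `Δ(λ)`. -/
def DeltaBlock (k : ℕ) (A : ℕ → Mat n) (lam : ℂ) (q : ℕ) : Mat n :=
  if q % 2 = 0 then lam ^ ((k - 1 - q) / 2) • (1 : Mat n)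
  else lam ^ ((k - q) / 2) • horner k A q lam

/-- The kn×n matrix `Δ(λ)`. -/
def Delta (k : ℕ) (A : ℕ → Mat n) (lam : ℂ) : Matrix (Fin k × Fin n) (Fin n) ℂ :=
  Matrix.of fun p b => DeltaBlock k A lam p.1.1 p.2 b

/-- The n×kn block-transpose `Δᴮ(λ)`. -/
def DeltaB (k : ℕ) (A : ℕ → Mat n) (lam : ℂ) : Matrix (Fin n) (Fin k × Fin n) ℂ :=
  Matrix.of fun a q => DeltaBlock k A lam q.1.1 a q.2

/-- (0-indexed) blocks of `𝒯₁`. -/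
def T1Block (k : ℕ) (A : ℕ → Mat n) (i j : ℕ) : Mat n :=
  if i = j then (if i % 2 = 0 then A (k - i) else 0)
  else if (j = i + 1 ∧ i % 2 = 1) ∨ (i = j + 1 ∧ j % 2 = 1) then 1 else 0

/-- (0-indexed) blocks of `𝒯₀`. -/
def T0Block (k : ℕ) (A : ℕ → Mat n) (i j : ℕ) : Mat n :=
  if i = j then (if i % 2 = 0 then -(A (k - i - 1)) else 0)
  else if (j = i + 1 ∧ i % 2 = 0) ∨ (i = j + 1 ∧ j % 2 = 0) then 1 else 0

/-- `𝒯₁`. -/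
def TT1 (k : ℕ) (A : ℕ → Mat n) : Matrix (Fin k × Fin n) (Fin k × Fin n) ℂ :=
  Matrix.of fun p q => T1Block k A p.1.1 q.1.1 p.2 q.2

/-- `𝒯₀`. -/
def TT0 (k : ℕ) (A : ℕ → Mat n) : Matrix (Fin k × Fin n) (Fin k × Fin n) ℂ :=
  Matrix.of fun p q => T0Block k A p.1.1 q.1.1 p.2 q.2

/-- The pencil `𝒯_P(λ) = λ𝒯₁ - 𝒯₀`. -/
def Tpencil (k : ℕ) (A : ℕ → Mat n) (lam : ℂ) : Matrix (Fin k × Fin n) (Fin k × Fin n) ℂ :=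
  lam • TT1 k A - TT0 k A

/-- Block anti-diagonal flip matrix `R`. -/
def Rmat (k n : ℕ) : Matrix (Fin k × Fin n) (Fin k × Fin n) ℂ :=
  Matrix.of fun p q => if p.1.1 + q.1.1 = k - 1 ∧ p.2 = q.2 then 1 else 0

/-- Block-diagonal sign matrix `S` (block `i` (1-indexed) is `-I` iff `i ≡ 0,1 mod 4`). -/
def Smat (k n : ℕ) : Matrix (Fin k × Fin n) (Fin k × Fin n) ℂ :=
  Matrix.of fun p q =>
    if p = q then (if (p.1.1 + 1) % 4 = 0 ∨ (p.1.1 + 1) % 4 = 1 then -1 else 1) else 0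

/-- `D = diag(I, -I, I, …, I)`. -/
def Dmat (k n : ℕ) : Matrix (Fin k × Fin n) (Fin k × Fin n) ℂ :=
  Matrix.of fun p q => if p = q then ((-1 : ℂ)) ^ p.1.1 else 0

/-- `e_k ⊗ I_n`: kn×n matrix with last block `I_n`. -/
def ekI (k n : ℕ) : Matrix (Fin k × Fin n) (Fin n) ℂ :=
  Matrix.of fun p b => if p.1.1 = k - 1 ∧ p.2 = b then 1 else 0

/-- The pencil `ℛ_P(λ) = S R 𝒯_P(λ) R S`. -/
def Rpencil (k : ℕ) (A : ℕ → Mat n) (lam : ℂ) : Matrix (Fin k × Fin n) (Fin k × Fin n) ℂ :=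
  Smat k n * Rmat k n * Tpencil k A lam * Rmat k n * Smat k n

/-- `max_{i=0:k} ‖A_i‖₂`. -/
def maxA (k : ℕ) (A : ℕ → Mat n) : ℝ :=
  (Finset.range (k + 1)).sup' Finset.nonempty_range_add_one fun i => specNorm (A i)

/-- `max_{i=0:k} max{1, ‖A_i‖₂}`. -/
def maxA1 (k : ℕ) (A : ℕ → Mat n) : ℝ :=
  (Finset.range (k + 1)).sup' Finset.nonempty_range_add_one fun i => max 1 (specNorm (A i))

/-- The quantity `d₁(δ)`. -/
def d1 (k : ℕ) (δ : ℂ) : ℝ :=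
  ∑ r ∈ Finset.range ((k - 1) / 2 + 1), ‖δ‖ ^ (2 * r)
    + ∑ r ∈ Finset.Icc 1 ((k - 1) / 2),
        ((k : ℝ) - 2 * r + 1) * ∑ s ∈ Finset.Icc r (k - r), ‖δ‖ ^ (2 * s)

/-- `ρ₁`. -/
def rho1 (k : ℕ) (A : ℕ → Mat n) : ℝ :=
  ((Finset.range (k + 1)).sup' Finset.nonempty_range_add_one fun i => max 1 (specNorm (A i) ^ 3))
    / min (specNorm (A k)) (specNorm (A 0))

/-- `ρ₂`. -/
def rho2 (k : ℕ) (A : ℕ → Mat n) : ℝ :=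
  min (max 1 (specNorm (A k))) (max 1 (specNorm (A 0))) / maxA k A

/-- `ρ′`. -/
def rho' (k : ℕ) (A : ℕ → Mat n) : ℝ :=
  ((Finset.range (k + 1)).sup' Finset.nonempty_range_add_one fun i => max 1 (specNorm (A i) ^ 2))
    / min (specNorm (A k)) (specNorm (A 0))

/-- `det P(λ)` as a polynomial in `λ`. -/
def detPoly (k : ℕ) (A : ℕ → Mat n) : Polynomial ℂ :=
  (∑ i ∈ Finset.range (k + 1), (Polynomial.X : Polynomial ℂ) ^ i • (A i).map Polynomial.C).det

/-- `L₁¹` (leading coefficient of `D₁(λ,P)`). -/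
def D1L1 (k : ℕ) (A : ℕ → Mat n) : Matrix (Fin k × Fin n) (Fin k × Fin n) ℂ :=
  Matrix.of fun p q =>
    (if p.1.1 = 0 ∧ q.1.1 = 0 then A k
     else if 1 ≤ p.1.1 ∧ 1 ≤ q.1.1 ∧ p.1.1 + q.1.1 ≤ k then -(A (k - p.1.1 - q.1.1))
     else 0) p.2 q.2

/-- `L₀¹` (trailing coefficient of `D₁(λ,P)`). -/
def D1L0 (k : ℕ) (A : ℕ → Mat n) : Matrix (Fin k × Fin n) (Fin k × Fin n) ℂ :=
  Matrix.of fun p q =>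
    (if p.1.1 + q.1.1 + 1 ≤ k then -(A (k - 1 - p.1.1 - q.1.1)) else 0) p.2 q.2

/-- `L₁ᵏ` (leading coefficient of `D_k(λ,P)`). -/
def DkL1 (k : ℕ) (A : ℕ → Mat n) : Matrix (Fin k × Fin n) (Fin k × Fin n) ℂ :=
  Matrix.of fun p q =>
    (if k - 1 ≤ p.1.1 + q.1.1 then A (2 * k - 1 - p.1.1 - q.1.1) else 0) p.2 q.2

/-- `L₀ᵏ` (trailing coefficient of `D_k(λ,P)`). -/
def DkL0 (k : ℕ) (A : ℕ → Mat n) : Matrix (Fin k × Fin n) (Fin k × Fin n) ℂ :=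
  Matrix.of fun p q =>
    (if p.1.1 = k - 1 ∧ q.1.1 = k - 1 then -(A 0)
     else if p.1.1 ≤ k - 2 ∧ q.1.1 ≤ k - 2 ∧ k - 2 ≤ p.1.1 + q.1.1
       then A (2 * k - 2 - p.1.1 - q.1.1)
     else 0) p.2 q.2

/-- `X₁` (leading coefficient of the first companion form `C₁(λ)`). -/
def C1X (k : ℕ) (A : ℕ → Mat n) : Matrix (Fin k × Fin n) (Fin k × Fin n) ℂ :=
  Matrix.of fun p q =>
    (if p.1 = q.1 then (if p.1.1 = 0 then A k else (1 : Mat n)) else 0) p.2 q.2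

/-- `Y₁` (trailing coefficient of the first companion form `C₁(λ)`). -/
def C1Y (k : ℕ) (A : ℕ → Mat n) : Matrix (Fin k × Fin n) (Fin k × Fin n) ℂ :=
  Matrix.of fun p q =>
    (if p.1.1 = 0 then -(A (k - 1 - q.1.1))
     else if p.1.1 = q.1.1 + 1 then (1 : Mat n) else 0) p.2 q.2



section Aux

lemma negOnePow_congr {a b : ℕ} (h : a % 2 = b % 2) : ((-1 : ℂ)) ^ a = (-1) ^ b := by
  rcases Nat.even_or_odd a with ha | ha
  · have h2 := Nat.even_iff.mp ha
    rw [ha.neg_one_pow, (Nat.even_iff.mpr (by omega) : Even b).neg_one_pow]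
  · have h2 := Nat.odd_iff.mp ha
    rw [ha.neg_one_pow, (Nat.odd_iff.mpr (by omega) : Odd b).neg_one_pow]

variable {k : ℕ}

lemma RD_apply (p q : Fin k × Fin n) :
    (Rmat k n * Dmat k n) p q =
      if p.1.1 + q.1.1 = k - 1 ∧ p.2 = q.2 then (-1 : ℂ) ^ (q.1.1 : ℕ) else 0 := by
  rw [Matrix.mul_apply, Finset.sum_eq_single q]
  · simp only [Rmat, Dmat, Matrix.of_apply, if_pos rfl]
    split_ifs <;> simp
  · intro r _ hr
    simp [Dmat, hr]
  · simp

lemma RD_mulVec (v : Fin k × Fin n → ℂ) (p : Fin k × Fin n) :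
    ((Rmat k n * Dmat k n) *ᵥ v) p = (-1 : ℂ) ^ ((p.1.rev : ℕ)) * v (p.1.rev, p.2) := by
  show ∑ q, (Rmat k n * Dmat k n) p q * v q = _
  rw [Finset.sum_eq_single (p.1.rev, p.2)]
  · rw [RD_apply]
    have hp := p.1.is_lt
    have : p.1.1 + (k - (p.1.1 + 1)) = k - 1 := by omega
    simp [this]
  · intro r _ hr
    rw [RD_apply]
    have : ¬(p.1.1 + r.1.1 = k - 1 ∧ p.2 = r.2) := by
      rintro ⟨h1, h2⟩
      apply hr
      have hp := p.1.is_lt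
      have hr1 := r.1.is_lt
      exact Prod.ext (Fin.ext (by rw [Fin.val_rev]; omega)) h2.symm
    simp [this]
  · simp

lemma RD_mul_apply (X : Matrix (Fin k × Fin n) (Fin k × Fin n) ℂ) (p q : Fin k × Fin n) :
    ((Rmat k n * Dmat k n) * X) p q = (-1 : ℂ) ^ ((p.1.rev : ℕ)) * X (p.1.rev, p.2) q := by
  rw [Matrix.mul_apply, Finset.sum_eq_single (p.1.rev, p.2)]
  · rw [RD_apply]
    have hp := p.1.is_lt
    have : p.1.1 + (k - (p.1.1 + 1)) = k - 1 := by omega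
    simp [this]
  · intro r _ hr
    rw [RD_apply]
    have : ¬(p.1.1 + r.1.1 = k - 1 ∧ p.2 = r.2) := by
      rintro ⟨h1, h2⟩
      apply hr
      have hp := p.1.is_lt
      exact Prod.ext (Fin.ext (by rw [Fin.val_rev]; omega)) h2.symm
    simp [this]
  · simp

lemma mul_RD_apply (X : Matrix (Fin k × Fin n) (Fin k × Fin n) ℂ) (p q : Fin k × Fin n) :
    (X * (Rmat k n * Dmat k n)) p q = (-1 : ℂ) ^ (q.1.1 : ℕ) * X p (q.1.rev, q.2) := by
  rw [Matrix.mul_apply, Finset.sum_eq_single (q.1.rev, q.2)]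
  · rw [RD_apply]
    have hq := q.1.is_lt
    have : (k - (q.1.1 + 1)) + q.1.1 = k - 1 := by omega
    simp [this, mul_comm]
  · intro r _ hr
    rw [RD_apply]
    have : ¬(r.1.1 + q.1.1 = k - 1 ∧ r.2 = q.2) := by
      rintro ⟨h1, h2⟩
      apply hr
      have hq := q.1.is_lt
      exact Prod.ext (Fin.ext (by rw [Fin.val_rev]; omega)) h2
    simp [this]
  · simp

lemma RDconj_apply (X : Matrix (Fin k × Fin n) (Fin k × Fin n) ℂ) (p q : Fin k × Fin n) :
    ((Rmat k n * Dmat k n) * X * (Rmat k n * Dmat k n)) p q =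
      (-1 : ℂ) ^ (((p.1.rev : ℕ)) + q.1.1) * X (p.1.rev, p.2) (q.1.rev, q.2) := by
  rw [mul_RD_apply, RD_mul_apply, pow_add]
  ring

lemma RD_herm (hk : Odd k) : (Rmat k n * Dmat k n)ᴴ = Rmat k n * Dmat k n := by
  have hk1 := Nat.odd_iff.mp hk
  ext p q
  rw [Matrix.conjTranspose_apply, RD_apply, RD_apply]
  by_cases h : q.1.1 + p.1.1 = k - 1 ∧ q.2 = p.2
  · have hp := p.1.is_lt
    rw [if_pos h, if_pos ⟨by omega, h.2.symm⟩]
    have : ((-1 : ℂ) ^ (p.1.1 : ℕ)) = (-1) ^ (q.1.1 : ℕ) := negOnePow_congr (by omega)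
    rw [← this]
    simp
  · rw [if_neg h, if_neg (by rintro ⟨h1, h2⟩; exact h ⟨by omega, h2.symm⟩)]
    simp

lemma RD_sq (hk : Odd k) : (Rmat k n * Dmat k n) * (Rmat k n * Dmat k n) = 1 := by
  have hk1 := Nat.odd_iff.mp hk
  ext p q
  rw [RD_mul_apply, RD_apply]
  by_cases h : p = q
  · subst h
    have hp := p.1.is_lt
    have hc : ((p.1.rev : Fin k) : ℕ) + p.1.1 = k - 1 := by rw [Fin.val_rev]; omega
    rw [if_pos ⟨hc, rfl⟩, Matrix.one_apply_eq, ← pow_add]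
    have : ((-1 : ℂ)) ^ (((p.1.rev : Fin k) : ℕ) + p.1.1) = (-1) ^ (0 : ℕ) :=
      negOnePow_congr (by rw [Fin.val_rev]; omega)
    rw [this, pow_zero]
  · have : ¬(((p.1.rev : Fin k) : ℕ) + q.1.1 = k - 1 ∧ p.2 = q.2) := by
      rintro ⟨h1, h2⟩
      apply h
      have hp := p.1.is_lt
      have hq := q.1.is_lt
      rw [Fin.val_rev] at h1
      exact Prod.ext (Fin.ext (by omega)) h2
    rw [if_neg this, Matrix.one_apply_ne h]
    simp

/-- The signed flip as a linear isometry equivalence of Euclidean space. -/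
def RDiso (k n : ℕ) (hk : Odd k) :
    EuclideanSpace ℂ (Fin k × Fin n) ≃ₗᵢ[ℂ] EuclideanSpace ℂ (Fin k × Fin n) := by
  have hk1 := Nat.odd_iff.mp hk
  have hinv : ∀ v : EuclideanSpace ℂ (Fin k × Fin n), ∀ p : Fin k × Fin n,
      (-1 : ℂ) ^ ((p.1.rev : ℕ)) *
        ((-1 : ℂ) ^ (((p.1.rev).rev : ℕ)) * v ((p.1.rev).rev, p.2)) = v p := by
    intro v p
    rw [Fin.rev_rev, ← mul_assoc, ← pow_add]
    have hp := p.1.is_lt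
    have : ((-1 : ℂ)) ^ (((p.1.rev : Fin k) : ℕ) + p.1.1) = (-1) ^ (0 : ℕ) :=
      negOnePow_congr (by rw [Fin.val_rev]; omega)
    rw [this, pow_zero, one_mul]
  exact
  { toFun := fun v => WithLp.toLp 2 (fun p : Fin k × Fin n => (-1 : ℂ) ^ ((p.1.rev : ℕ)) * v (p.1.rev, p.2))
    invFun := fun v => WithLp.toLp 2 (fun p : Fin k × Fin n => (-1 : ℂ) ^ ((p.1.rev : ℕ)) * v (p.1.rev, p.2))
    left_inv := fun v => PiLp.ext fun p => hinv v p
    right_inv := fun v => PiLp.ext fun p => hinv v p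
    map_add' := fun u v => PiLp.ext fun p => by simp [mul_add]
    map_smul' := fun c v => PiLp.ext fun p => by simp; ring
    norm_map' := fun v => by
      rw [EuclideanSpace.norm_eq, EuclideanSpace.norm_eq]
      congr 1
      rw [← Equiv.sum_comp (Equiv.prodCongr (Fin.revPerm) (Equiv.refl (Fin n)))
        (fun p => ‖v p‖ ^ 2)]
      apply Finset.sum_congr rfl
      intro p _
      simp [Equiv.prodCongr, Prod.map]
      rfl }

lemma RDiso_apply (hk : Odd k) (v : EuclideanSpace ℂ (Fin k × Fin n)) (p : Fin k × Fin n) :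
    RDiso k n hk v p = (-1 : ℂ) ^ ((p.1.rev : ℕ)) * v (p.1.rev, p.2) := rfl

lemma toEuclideanLin_mul {ι : Type*} [Fintype ι] [DecidableEq ι] (M N : Matrix ι ι ℂ) :
    Matrix.toEuclideanLin (M * N) =
      (Matrix.toEuclideanLin M).comp (Matrix.toEuclideanLin N) := by
  apply LinearMap.ext
  intro v
  simp only [Matrix.toEuclideanLin_apply, LinearMap.comp_apply, Equiv.apply_symm_apply,
    Matrix.mulVec_mulVec]

lemma toEuclideanLin_RD (hk : Odd k) (v : EuclideanSpace ℂ (Fin k × Fin n)) :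
    Matrix.toEuclideanLin (Rmat k n * Dmat k n) v = RDiso k n hk v := by
  refine PiLp.ext fun p => ?_
  show ((Rmat k n * Dmat k n) *ᵥ (fun i => v i)) p = _
  rw [RD_mulVec, RDiso_apply]

lemma specNorm_neg {ι : Type*} [Fintype ι] [DecidableEq ι] (M : Matrix ι ι ℂ) :
    specNorm (-M) = specNorm M := by
  unfold specNorm
  rw [map_neg, map_neg, norm_neg]

lemma specNorm_RD_conj (hk : Odd k) (X : Matrix (Fin k × Fin n) (Fin k × Fin n) ℂ) :
    specNorm (Rmat k n * Dmat k n * X * (Rmat k n * Dmat k n)) = specNorm X := by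
  set E := RDiso k n hk with hE
  have h1 : LinearMap.toContinuousLinearMap
        (Matrix.toEuclideanLin (Rmat k n * Dmat k n * X * (Rmat k n * Dmat k n)))
      = (E.toLinearIsometry.toContinuousLinearMap).comp
          ((LinearMap.toContinuousLinearMap (Matrix.toEuclideanLin X)).comp
            E.toLinearIsometry.toContinuousLinearMap) := by
    apply ContinuousLinearMap.ext
    intro v
    simp only [ContinuousLinearMap.comp_apply, LinearMap.coe_toContinuousLinearMap',
      LinearIsometry.coe_toContinuousLinearMap, LinearIsometryEquiv.coe_toLinearIsometry]
    rw [toEuclideanLin_mul, toEuclideanLin_mul]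
    simp only [LinearMap.comp_apply]
    rw [toEuclideanLin_RD hk, toEuclideanLin_RD hk]
  unfold specNorm
  rw [h1, LinearIsometry.norm_toContinuousLinearMap_comp]
  exact ContinuousLinearMap.opNorm_comp_linearIsometryEquiv _ E

lemma vecNorm_RD (hk : Odd k) (v : Fin k × Fin n → ℂ) :
    vecNorm ((Rmat k n * Dmat k n) *ᵥ v) = vecNorm v := by
  unfold vecNorm
  congr 1
  rw [← Equiv.sum_comp (Equiv.prodCongr (Fin.revPerm) (Equiv.refl (Fin n)))
    (fun p => ‖v p‖ ^ 2)]
  apply Finset.sum_congr rfl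
  intro p _
  rw [RD_mulVec]
  simp [Equiv.prodCongr, Prod.map, _root_.map_mul, map_pow]

lemma block1 (hk : Odd k) (A : ℕ → Mat n) (i j : ℕ) (hi : i < k) (hj : j < k) :
    T1Block k (fun m => A (k - m)) i j =
      -(((-1 : ℂ)) ^ (i + j) • T0Block k A (k - (i + 1)) (k - (j + 1))) := by
  have hk1 := Nat.odd_iff.mp hk
  unfold T1Block T0Block
  by_cases hij : i = j
  · subst hij
    rw [if_pos rfl, if_pos (by omega : k - (i + 1) = k - (i + 1))]
    have hpar : (k - (i + 1)) % 2 = i % 2 := by omega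
    rw [hpar]
    by_cases he : i % 2 = 0
    · rw [if_pos he, if_pos he]
      have e1 : k - (k - i) = i := by omega
      have e2 : k - (k - (i + 1)) - 1 = i := by omega
      simp only [e1, e2]
      have : ((-1 : ℂ)) ^ (i + i) = 1 := Even.neg_one_pow ⟨i, rfl⟩
      rw [this, one_smul, neg_neg]
    · rw [if_neg he, if_neg he]
      simp
  · rw [if_neg hij, if_neg (by omega : ¬(k - (i + 1) = k - (j + 1)))]
    by_cases hc : (j = i + 1 ∧ i % 2 = 1) ∨ (i = j + 1 ∧ j % 2 = 1)
    · rw [if_pos hc]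
      have hc' : (k - (j + 1) = k - (i + 1) + 1 ∧ (k - (i + 1)) % 2 = 0) ∨
          (k - (i + 1) = k - (j + 1) + 1 ∧ (k - (j + 1)) % 2 = 0) := by omega
      rw [if_pos hc']
      have : ((-1 : ℂ)) ^ (i + j) = -1 := Odd.neg_one_pow (Nat.odd_iff.mpr (by omega))
      rw [this]
      simp
    · rw [if_neg hc]
      have hc' : ¬((k - (j + 1) = k - (i + 1) + 1 ∧ (k - (i + 1)) % 2 = 0) ∨
          (k - (i + 1) = k - (j + 1) + 1 ∧ (k - (j + 1)) % 2 = 0)) := by omega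
      rw [if_neg hc']
      simp

lemma block0 (hk : Odd k) (A : ℕ → Mat n) (i j : ℕ) (hi : i < k) (hj : j < k) :
    T0Block k (fun m => A (k - m)) i j =
      -(((-1 : ℂ)) ^ (i + j) • T1Block k A (k - (i + 1)) (k - (j + 1))) := by
  have hk1 := Nat.odd_iff.mp hk
  unfold T0Block T1Block
  by_cases hij : i = j
  · subst hij
    rw [if_pos rfl, if_pos (by omega : k - (i + 1) = k - (i + 1))]
    have hpar : (k - (i + 1)) % 2 = i % 2 := by omega
    rw [hpar]
    by_cases he : i % 2 = 0
    · rw [if_pos he, if_pos he]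
      have e1 : k - (k - i - 1) = i + 1 := by omega
      have e2 : k - (k - (i + 1)) = i + 1 := by omega
      simp only [e1, e2]
      have : ((-1 : ℂ)) ^ (i + i) = 1 := Even.neg_one_pow ⟨i, rfl⟩
      rw [this, one_smul]
    · rw [if_neg he, if_neg he]
      simp
  · rw [if_neg hij, if_neg (by omega : ¬(k - (i + 1) = k - (j + 1)))]
    by_cases hc : (j = i + 1 ∧ i % 2 = 0) ∨ (i = j + 1 ∧ j % 2 = 0)
    · rw [if_pos hc]
      have hc' : (k - (j + 1) = k - (i + 1) + 1 ∧ (k - (i + 1)) % 2 = 1) ∨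
          (k - (i + 1) = k - (j + 1) + 1 ∧ (k - (j + 1)) % 2 = 1) := by omega
      rw [if_pos hc']
      have : ((-1 : ℂ)) ^ (i + j) = -1 := Odd.neg_one_pow (Nat.odd_iff.mpr (by omega))
      rw [this]
      simp
    · rw [if_neg hc]
      have hc' : ¬((k - (j + 1) = k - (i + 1) + 1 ∧ (k - (i + 1)) % 2 = 1) ∨
          (k - (i + 1) = k - (j + 1) + 1 ∧ (k - (j + 1)) % 2 = 1)) := by omega
      rw [if_neg hc']
      simp

lemma TT1_rev (hk : Odd k) (A : ℕ → Mat n) :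
    TT1 k (fun i => A (k - i)) =
      -(Rmat k n * Dmat k n * TT0 k A * (Rmat k n * Dmat k n)) := by
  ext p q
  rw [Matrix.neg_apply, RDconj_apply]
  show T1Block k (fun i => A (k - i)) p.1.1 q.1.1 p.2 q.2 = _
  rw [block1 hk A p.1.1 q.1.1 p.1.is_lt q.1.is_lt]
  show -(((-1 : ℂ)) ^ (p.1.1 + q.1.1) • T0Block k A (k - (p.1.1 + 1)) (k - (q.1.1 + 1))) p.2 q.2
      = _
  have hsgn : ((-1 : ℂ)) ^ (((p.1.rev : Fin k) : ℕ) + q.1.1) = (-1) ^ (p.1.1 + q.1.1) := by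
    have hp := p.1.is_lt
    have hk1 := Nat.odd_iff.mp hk
    exact negOnePow_congr (by rw [Fin.val_rev]; omega)
  rw [hsgn]
  show _ = -((-1 : ℂ) ^ (p.1.1 + q.1.1) *
      T0Block k A ((p.1.rev : Fin k) : ℕ) ((q.1.rev : Fin k) : ℕ) p.2 q.2)
  rw [Fin.val_rev, Fin.val_rev]
  simp [Matrix.neg_apply, Matrix.smul_apply, smul_eq_mul]

lemma TT0_rev (hk : Odd k) (A : ℕ → Mat n) :
    TT0 k (fun i => A (k - i)) =
      -(Rmat k n * Dmat k n * TT1 k A * (Rmat k n * Dmat k n)) := by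
  ext p q
  rw [Matrix.neg_apply, RDconj_apply]
  show T0Block k (fun i => A (k - i)) p.1.1 q.1.1 p.2 q.2 = _
  rw [block0 hk A p.1.1 q.1.1 p.1.is_lt q.1.is_lt]
  show -(((-1 : ℂ)) ^ (p.1.1 + q.1.1) • T1Block k A (k - (p.1.1 + 1)) (k - (q.1.1 + 1))) p.2 q.2
      = _
  have hsgn : ((-1 : ℂ)) ^ (((p.1.rev : Fin k) : ℕ) + q.1.1) = (-1) ^ (p.1.1 + q.1.1) := by
    have hp := p.1.is_lt
    have hk1 := Nat.odd_iff.mp hk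
    exact negOnePow_congr (by rw [Fin.val_rev]; omega)
  rw [hsgn]
  show _ = -((-1 : ℂ) ^ (p.1.1 + q.1.1) *
      T1Block k A ((p.1.rev : Fin k) : ℕ) ((q.1.rev : Fin k) : ℕ) p.2 q.2)
  rw [Fin.val_rev, Fin.val_rev]
  simp [Matrix.neg_apply, Matrix.smul_apply, smul_eq_mul]

end Aux

theorem stmt_14 {n k : ℕ} (hk : Odd k) (hk3 : 3 ≤ k) (A : ℕ → Mat n)
    (hAk : A k ≠ 0) (hA0 : A 0 ≠ 0)
    (δ : ℂ) (hδ : δ ≠ 0) (x y : Fin k × Fin n → ℂ) (hx0 : x ≠ 0) (hy0 : y ≠ 0)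
    (hx : Tpencil k A δ *ᵥ x = 0) (hy : Matrix.vecMul (star y) (Tpencil k A δ) = 0)
    (hd : star y ⬝ᵥ (TT1 k A *ᵥ x) ≠ 0) :
    (‖δ‖ * specNorm (TT1 k A) + specNorm (TT0 k A)) * vecNorm y * vecNorm x
        / (‖δ‖ * ‖star y ⬝ᵥ (TT1 k A *ᵥ x)‖)
      = (‖δ⁻¹‖ * specNorm (TT1 k (fun i => A (k - i)))
            + specNorm (TT0 k (fun i => A (k - i))))
            * vecNorm ((Rmat k n * Dmat k n) *ᵥ y) * vecNorm ((Rmat k n * Dmat k n) *ᵥ x)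
          / (‖δ⁻¹‖
              * ‖star ((Rmat k n * Dmat k n) *ᵥ y)
                  ⬝ᵥ (TT1 k (fun i => A (k - i)) *ᵥ ((Rmat k n * Dmat k n) *ᵥ x))‖) := by
  have hk1 := Nat.odd_iff.mp hk
  have hν : star y ⬝ᵥ (TT0 k A *ᵥ x) = δ * (star y ⬝ᵥ (TT1 k A *ᵥ x)) := by
    have h0 : star y ⬝ᵥ (Tpencil k A δ *ᵥ x) = 0 := by
      rw [Matrix.dotProduct_mulVec, hy, zero_dotProduct]
    unfold Tpencil at h0
    rw [Matrix.sub_mulVec, dotProduct_sub, Matrix.smul_mulVec,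
      dotProduct_smul, smul_eq_mul] at h0
    exact (sub_eq_zero.mp h0).symm
  have hbig : star ((Rmat k n * Dmat k n) *ᵥ y)
        ⬝ᵥ (TT1 k (fun i => A (k - i)) *ᵥ ((Rmat k n * Dmat k n) *ᵥ x))
      = -(δ * (star y ⬝ᵥ (TT1 k A *ᵥ x))) := by
    rw [TT1_rev hk A, Matrix.star_mulVec, RD_herm hk, Matrix.mulVec_mulVec,
      Matrix.dotProduct_mulVec, Matrix.vecMul_vecMul]
    have key : ∀ M T : Matrix (Fin k × Fin n) (Fin k × Fin n) ℂ,
        M * M = 1 → M * (-(M * T * M) * M) = -T := by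
      intro M T h
      rw [Matrix.neg_mul, Matrix.mul_neg]
      rw [Matrix.mul_assoc (M * T) M M, h, Matrix.mul_one, ← Matrix.mul_assoc, h,
        Matrix.one_mul]
    rw [key (Rmat k n * Dmat k n) (TT0 k A) (RD_sq hk), ← Matrix.dotProduct_mulVec,
      Matrix.neg_mulVec, dotProduct_neg, hν]
  rw [hbig, TT1_rev hk A, specNorm_neg, specNorm_RD_conj hk,
    TT0_rev hk A, specNorm_neg, specNorm_RD_conj hk,
    vecNorm_RD hk y, vecNorm_RD hk x, norm_inv]
  rw [norm_neg, norm_mul]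
  have ha : (0 : ℝ) < ‖δ‖ := norm_pos_iff.mpr hδ
  have hν0 : (0 : ℝ) < ‖star y ⬝ᵥ (TT1 k A *ᵥ x)‖ := norm_pos_iff.mpr hd
  have h1 : (0 : ℝ) < ‖δ‖ * ‖star y ⬝ᵥ (TT1 k A *ᵥ x)‖ :=
    mul_pos ha hν0
  have h2 : (0 : ℝ) < (‖δ‖)⁻¹ *
      (‖δ‖ * ‖star y ⬝ᵥ (TT1 k A *ᵥ x)‖) :=
    mul_pos (inv_pos.mpr ha) h1
  rw [div_eq_div_iff h1.ne' h2.ne']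
  field_simp
  ring


end MPoly
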